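/- Let N ∈ ℕ and let u⁰, u¹, …, u^N be real numbers. Then the N×N matrix U whose (ℓ,k)-entry (for ℓ,k = 1,…,N) is (u^ℓ)^k − (u⁰)^k has determinant equal to the product over 0 ≤ ℓ < m ≤ N of (u^m − u^ℓ). -/
import Mathlib

/-- The determinant of the N×N matrix with entries (u^(ℓ))^k − (u^(0))^k,
for ℓ,k = 1,…,N, equals the Vandermonde product ∏_{0 ≤ ℓ < m ≤ N} (u^(m) − u^(ℓ)). -/
theorem stmt_0 (N : ℕ) (u : Fin (N + 1) → ℝ) :
    (Matrix.of (fun ℓ k : Fin N =>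
        u ℓ.succ ^ ((k : ℕ) + 1) - u 0 ^ ((k : ℕ) + 1))).det =
      ∏ p ∈ Finset.univ.filter
          (fun p : Fin (N + 1) × Fin (N + 1) => p.1 < p.2),
        (u p.2 - u p.1) := by
  -- The modified Vandermonde matrix: row 0 unchanged, row 0 subtracted from other rows.
  set C : Matrix (Fin (N + 1)) (Fin (N + 1)) ℝ :=
    Matrix.of (fun i j => if i = 0 then u 0 ^ (j : ℕ)
      else u i ^ (j : ℕ) - u 0 ^ (j : ℕ)) with hC
  have hdetC : C.det = (Matrix.vandermonde u).det := by
    refine (Matrix.det_eq_of_forall_row_eq_smul_add_const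
      (A := Matrix.vandermonde u) (B := C)
      (fun i => if i = 0 then 0 else 1) 0 (by simp) ?_).symm
    intro i j
    by_cases h : i = 0 <;> simp [hC, Matrix.vandermonde, h]
  have hexp : C.det =
      (Matrix.of (fun ℓ k : Fin N =>
        u ℓ.succ ^ ((k : ℕ) + 1) - u 0 ^ ((k : ℕ) + 1))).det := by
    rw [Matrix.det_succ_column_zero]
    rw [Fin.sum_univ_succ]
    have h1 : ∀ i : Fin N, C i.succ 0 = 0 := by
      intro i; simp [hC, Fin.succ_ne_zero]
    simp only [h1, mul_zero, zero_mul, Finset.sum_const_zero, add_zero]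
    have h0 : C 0 0 = 1 := by simp [hC]
    rw [h0]
    simp only [Fin.val_zero, pow_zero, one_mul, mul_one]
    refine congrArg Matrix.det ?_
    ext ℓ k
    simp [hC, Matrix.submatrix, Fin.succ_ne_zero, Fin.succAbove]
  rw [← hexp, hdetC, Matrix.det_vandermonde]
  rw [Finset.prod_filter]
  rw [← Finset.univ_product_univ, Finset.prod_product]
  refine Finset.prod_congr rfl fun i _ => ?_
  rw [← Finset.prod_filter]
  refine (Finset.prod_congr ?_ fun j _ => rfl)
  ext j
  simp
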